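/- With notation as above, set W = Ãᵀ(ÃΣ^{-1}Ãᵀ)^{-1/2} ∈ ℝ^{d×(d−d_c)}. Then WWᵀ = Σ^c, where Σ^c = Σ − ΣAᵀ(AΣAᵀ)^{-1}AΣ. -/

import Mathlib

open Matrix

/-- With `W = Ãᵀ (Ã Σ⁻¹ Ãᵀ)^{-1/2}` (where `R` is the symmetric positive definite
square root of `Ã Σ⁻¹ Ãᵀ`), we have `W Wᵀ = Σ^c = Σ − Σ Aᵀ (A Σ Aᵀ)⁻¹ A Σ`. -/
theorem W_mul_W_transpose {d dc : ℕ} (hdc : dc < d)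
    (A : Matrix (Fin dc) (Fin d) ℝ) (hA : A.rank = dc)
    (At : Matrix (Fin (d - dc)) (Fin d) ℝ)
    (hAAt : A * Atᵀ = 0) (hAt : At.rank = d - dc)
    (Sg : Matrix (Fin d) (Fin d) ℝ) (hSg : Sg.PosDef)
    (R : Matrix (Fin (d - dc)) (Fin (d - dc)) ℝ) (hR : R.PosDef)
    (hRsq : R * R = At * Sg⁻¹ * Atᵀ) :
    (Atᵀ * R⁻¹) * (Atᵀ * R⁻¹)ᵀ = Sg - Sg * Aᵀ * (A * Sg * Aᵀ)⁻¹ * A * Sg := by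
  classical
  set T : Matrix (Fin (d - dc)) (Fin (d - dc)) ℝ := At * Sg⁻¹ * Atᵀ with hT
  set G : Matrix (Fin dc) (Fin dc) ℝ := A * Sg * Aᵀ with hG
  -- Aᵀ has trivial kernel
  have hAtrans_rank : Aᵀ.rank = dc := by rw [A.rank_transpose, hA]
  have hAker : LinearMap.ker Aᵀ.mulVecLin = ⊥ := by
    have h1 := LinearMap.finrank_range_add_finrank_ker Aᵀ.mulVecLin
    rw [show Module.finrank ℝ (Fin dc → ℝ) = dc by simp] at h1
    have h2 : Module.finrank ℝ (LinearMap.range Aᵀ.mulVecLin) = dc := hAtrans_rank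
    have : Module.finrank ℝ (LinearMap.ker Aᵀ.mulVecLin) = 0 := by omega
    exact Submodule.finrank_eq_zero.mp this
  have hAtInj : Function.Injective (fun x => Aᵀ *ᵥ x) := by
    intro x y hxy
    have : Aᵀ.mulVecLin (x - y) = 0 := by
      simp only [mulVecLin_apply, mulVec_sub]
      simpa [sub_eq_zero] using hxy
    have := hAker ▸ (LinearMap.mem_ker.mpr this)
    simpa [sub_eq_zero] using this
  -- G = A Sg Aᵀ is positive definite
  have hGpd : G.PosDef := by
    refine Matrix.PosDef.of_dotProduct_mulVec_pos ?_ ?_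
    · have := isHermitian_mul_mul_conjTranspose A hSg.isHermitian
      simpa [hG] using this
    · intro x hx
      have hAx : Aᵀ *ᵥ x ≠ 0 := by
        intro h
        apply hx
        apply hAtInj
        simpa using h
      have := hSg.dotProduct_mulVec_pos hAx
      calc (0:ℝ) < star (Aᵀ *ᵥ x) ⬝ᵥ Sg *ᵥ (Aᵀ *ᵥ x) := this
        _ = star x ⬝ᵥ G *ᵥ x := by
            rw [mulVec_mulVec, hG, star_trivial, star_trivial, dotProduct_mulVec,
              dotProduct_mulVec, Matrix.mulVec_transpose, Matrix.vecMul_vecMul,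
              Matrix.mul_assoc]
  have hGdet : IsUnit G.det := (Matrix.isUnit_iff_isUnit_det _).mp hGpd.isUnit
  -- T = R * R is invertible
  have hTdet : IsUnit T.det := by
    rw [← hRsq, det_mul]
    exact ((Matrix.isUnit_iff_isUnit_det _).mp hR.isUnit).mul ((Matrix.isUnit_iff_isUnit_det _).mp hR.isUnit)
  have hSdet : IsUnit Sg.det := (Matrix.isUnit_iff_isUnit_det _).mp hSg.isUnit
  -- kernel of A equals range of Atᵀ
  have hrange_le : LinearMap.range Atᵀ.mulVecLin ≤ LinearMap.ker A.mulVecLin := by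
    rintro _ ⟨c, rfl⟩
    simp only [LinearMap.mem_ker, mulVecLin_apply, mulVec_mulVec, hAAt]
    simp
  have hkerA : LinearMap.ker A.mulVecLin = LinearMap.range Atᵀ.mulVecLin := by
    symm
    apply Submodule.eq_of_le_of_finrank_eq hrange_le
    have h1 := LinearMap.finrank_range_add_finrank_ker A.mulVecLin
    rw [show Module.finrank ℝ (Fin d → ℝ) = d by simp] at h1
    have h2 : Module.finrank ℝ (LinearMap.range A.mulVecLin) = dc := hA
    have h3 : Module.finrank ℝ (LinearMap.range Atᵀ.mulVecLin) = d - dc := by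
      rw [show Module.finrank ℝ (LinearMap.range Atᵀ.mulVecLin) = Atᵀ.rank from rfl,
        At.rank_transpose, hAt]
    omega
  -- the key matrix Y
  set Y : Matrix (Fin d) (Fin d) ℝ :=
    Sg * Aᵀ * G⁻¹ * A + Atᵀ * T⁻¹ * (At * Sg⁻¹) with hY
  have hAY : A * Y = A := by
    rw [hY, Matrix.mul_add]
    have e1 : A * (Sg * Aᵀ * G⁻¹ * A) = A := by
      rw [show A * (Sg * Aᵀ * G⁻¹ * A) = (A * Sg * Aᵀ) * G⁻¹ * A by
        simp only [Matrix.mul_assoc]]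
      rw [← hG, Matrix.mul_nonsing_inv _ hGdet, Matrix.one_mul]
    have e2 : A * (Atᵀ * T⁻¹ * (At * Sg⁻¹)) = 0 := by
      rw [show A * (Atᵀ * T⁻¹ * (At * Sg⁻¹)) = (A * Atᵀ) * (T⁻¹ * (At * Sg⁻¹)) by
        simp only [Matrix.mul_assoc], hAAt, Matrix.zero_mul]
    rw [e1, e2, add_zero]
  have hAtA : At * Aᵀ = 0 := by
    have := congrArg Matrix.transpose hAAt
    simpa [Matrix.transpose_mul] using this
  have hAtSY : (At * Sg⁻¹) * Y = At * Sg⁻¹ := by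
    rw [hY, Matrix.mul_add]
    have e1 : (At * Sg⁻¹) * (Sg * Aᵀ * G⁻¹ * A) = 0 := by
      rw [show (At * Sg⁻¹) * (Sg * Aᵀ * G⁻¹ * A) = At * (Sg⁻¹ * Sg) * Aᵀ * (G⁻¹ * A) by
        simp only [Matrix.mul_assoc], Matrix.nonsing_inv_mul _ hSdet, Matrix.mul_one,
        hAtA, Matrix.zero_mul]
    have e2 : (At * Sg⁻¹) * (Atᵀ * T⁻¹ * (At * Sg⁻¹)) = At * Sg⁻¹ := by
      rw [show (At * Sg⁻¹) * (Atᵀ * T⁻¹ * (At * Sg⁻¹)) = (At * Sg⁻¹ * Atᵀ) * T⁻¹ * (At * Sg⁻¹) by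
        simp only [Matrix.mul_assoc], ← hT, Matrix.mul_nonsing_inv _ hTdet, Matrix.one_mul]
    rw [e1, e2, zero_add]
  -- Y = 1
  have hYone : Y = 1 := by
    have key : ∀ v : Fin d → ℝ, Y *ᵥ v = v := by
      intro v
      set w : Fin d → ℝ := Y *ᵥ v - v with hw
      have hwA : A *ᵥ w = 0 := by
        rw [hw, mulVec_sub, mulVec_mulVec, hAY, sub_self]
      have hwAt : (At * Sg⁻¹) *ᵥ w = 0 := by
        rw [hw, mulVec_sub, mulVec_mulVec, hAtSY, sub_self]
      have hwmem : w ∈ LinearMap.ker A.mulVecLin := by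
        simpa [LinearMap.mem_ker, mulVecLin_apply] using hwA
      rw [hkerA] at hwmem
      obtain ⟨c, hc⟩ := hwmem
      simp only [mulVecLin_apply] at hc
      have : T *ᵥ c = 0 := by
        have := hwAt
        rw [← hc, mulVec_mulVec] at this
        rw [show (At * Sg⁻¹) * Atᵀ = T by rw [hT, Matrix.mul_assoc]] at this
        exact this
      have hc0 : c = 0 := by
        have h2 := congrArg (fun z => T⁻¹ *ᵥ z) this
        simpa [mulVec_mulVec, Matrix.nonsing_inv_mul _ hTdet] using h2
      have hw0 : w = 0 := by rw [← hc, hc0, mulVec_zero]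
      have : Y *ᵥ v - v = 0 := by rw [← hw, hw0]
      exact sub_eq_zero.mp this
    have : Matrix.toLin' Y = Matrix.toLin' (1 : Matrix (Fin d) (Fin d) ℝ) := by
      apply LinearMap.ext
      intro v
      rw [Matrix.toLin'_apply, Matrix.toLin'_apply, key, Matrix.one_mulVec]
    exact Matrix.toLin'.injective this
  -- conclude: multiply Y = 1 on the right by Sg
  have hmain : Sg * Aᵀ * G⁻¹ * A * Sg + Atᵀ * T⁻¹ * At = Sg := by
    have := congrArg (fun M => M * Sg) hYone
    simp only [hY, Matrix.add_mul, Matrix.one_mul] at this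
    rw [show Atᵀ * T⁻¹ * (At * Sg⁻¹) * Sg = Atᵀ * T⁻¹ * At * (Sg⁻¹ * Sg) by
      simp only [Matrix.mul_assoc], Matrix.nonsing_inv_mul _ hSdet, Matrix.mul_one] at this
    exact this
  -- rewrite the LHS of the goal
  have hRsymm : Rᵀ = R := hR.isHermitian.eq
  have hLHS : (Atᵀ * R⁻¹) * (Atᵀ * R⁻¹)ᵀ = Atᵀ * T⁻¹ * At := by
    rw [Matrix.transpose_mul, Matrix.transpose_transpose, Matrix.transpose_nonsing_inv, hRsymm]
    rw [show Atᵀ * R⁻¹ * (R⁻¹ * At) = Atᵀ * (R⁻¹ * R⁻¹) * At by simp only [Matrix.mul_assoc]]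
    rw [← Matrix.mul_inv_rev, hRsq]
  rw [hLHS]
  rw [show (A * Sg * Aᵀ)⁻¹ = G⁻¹ by rw [hG]]
  exact eq_sub_of_add_eq' hmain
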